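/- Let m, n be positive integers with n ≥ 3 such that every prime divisor of m also divides n. Then Ω_{mn}(x) = Ω_n(T_m(x)) as polynomials over ℝ. -/

import Mathlib

open Polynomial Polynomial.Chebyshev

noncomputable def Omega (d : ℕ) : Polynomial ℝ :=
  if d = 1 then Polynomial.X - 1
  else ∏ k ∈ (Finset.range (d + 1)).filter (fun k => 1 ≤ k ∧ 2 * k ≤ d ∧ Nat.gcd k d = 1),
    (Polynomial.C 2 * (Polynomial.X - Polynomial.C (Real.cos (2 * k * Real.pi / d))))

lemma T_natDegree_le : ∀ m : ℕ, (T ℝ (m : ℤ)).natDegree ≤ m := by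
  intro m
  induction m using Nat.strong_induction_on with
  | _ m ih =>
    match m with
    | 0 => simp [T_zero]
    | 1 => simp [T_one]
    | (m + 2) =>
      have h := T_add_two ℝ (m : ℤ)
      rw [show ((m + 2 : ℕ) : ℤ) = (m : ℤ) + 2 by push_cast; ring, h]
      refine le_trans (natDegree_sub_le _ _) ?_
      have h1 : (2 * X * T ℝ ((m:ℤ) + 1)).natDegree ≤ m + 2 := by
        refine le_trans (natDegree_mul_le) ?_
        have := ih (m+1) (by omega)
        rw [show ((m + 1 : ℕ) : ℤ) = (m : ℤ) + 1 by push_cast; ring] at this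
        have h2 : (2 * X : ℝ[X]).natDegree ≤ 1 := by compute_degree
        omega
      have h2 : (T ℝ (m:ℤ)).natDegree ≤ m + 2 := le_trans (ih m (by omega)) (by omega)
      omega

lemma T_deg : ∀ m : ℕ, (T ℝ ((m + 1 : ℕ) : ℤ)).natDegree = m + 1 ∧
    (T ℝ ((m + 1 : ℕ) : ℤ)).leadingCoeff = 2 ^ m := by
  intro m
  induction m using Nat.strong_induction_on with
  | _ m ih =>
    match m with
    | 0 => simp [T_one]
    | 1 =>
      constructor
      · rw [show ((2:ℕ):ℤ) = 2 by norm_num, T_two]; compute_degree!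
      · rw [show ((2:ℕ):ℤ) = 2 by norm_num, T_two]
        have hd : (2 * X ^ 2 - 1 : ℝ[X]).natDegree = 2 := by compute_degree!
        rw [leadingCoeff, hd]
        simp [coeff_sub, coeff_one]
    | (m + 2) =>
      obtain ⟨hd1, hl1⟩ := ih (m+1) (by omega)
      set p := T ℝ ((m + 2 : ℕ) : ℤ) with hp
      have hp0 : p ≠ 0 := by
        intro hc
        rw [hc] at hl1
        simp at hl1
        exact (pow_ne_zero (m+1) (two_ne_zero)) hl1.symm
      have heq : T ℝ ((m + 3 : ℕ) : ℤ) = 2 * X * p - T ℝ ((m + 1 : ℕ) : ℤ) := by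
        rw [show ((m + 3 : ℕ) : ℤ) = ((m:ℤ)+1) + 2 by push_cast; ring,
          T_add_two ℝ ((m:ℤ)+1),
          show (m:ℤ) + 1 + 1 = ((m+2:ℕ):ℤ) by push_cast; ring,
          show (m:ℤ) + 1 = ((m+1:ℕ):ℤ) by push_cast; ring, hp]
      have hdle : (T ℝ ((m + 1 : ℕ) : ℤ)).natDegree ≤ m + 1 := T_natDegree_le (m+1)
      have hXp : (2 * X * p) = C 2 * (X * p) := by
        rw [show (Polynomial.C 2 : ℝ[X]) = 2 from map_ofNat Polynomial.C 2]; ring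
      have hdXp : (2 * X * p).natDegree = m + 3 := by
        rw [hXp, natDegree_C_mul (two_ne_zero), natDegree_mul X_ne_zero hp0,
          natDegree_X, hd1]; omega
      have hdlt : (T ℝ ((m + 1 : ℕ) : ℤ)).natDegree < (2 * X * p).natDegree := by omega
      have hdeg : (T ℝ ((m + 3 : ℕ) : ℤ)).natDegree = m + 3 := by
        rw [heq, natDegree_sub_eq_left_of_natDegree_lt hdlt, hdXp]
      refine ⟨hdeg, ?_⟩
      have hcoef : p.coeff (m + 2) = 2 ^ (m + 1) := by rw [← hd1, ← leadingCoeff, hl1]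
      have hc0 : (T ℝ ((m + 1 : ℕ) : ℤ)).coeff (m + 3) = 0 :=
        coeff_eq_zero_of_natDegree_lt (by omega)
      have hcp : (X * p).coeff (m + 3) = p.coeff (m + 2) := coeff_X_mul p (m+2)
      rw [leadingCoeff, hdeg, heq, coeff_sub, hXp, coeff_C_mul, hcp, hc0, sub_zero, hcoef]
      ring

def S (d : ℕ) : Finset ℕ :=
  (Finset.range (d + 1)).filter (fun k => 1 ≤ k ∧ 2 * k ≤ d ∧ Nat.gcd k d = 1)

noncomputable def r (d k : ℕ) : ℝ := Real.cos (2 * k * Real.pi / d)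

lemma mem_S {d k : ℕ} : k ∈ S d ↔ 1 ≤ k ∧ 2 * k ≤ d ∧ Nat.gcd k d = 1 := by
  unfold _root_.S
  simp only [Finset.mem_filter, Finset.mem_range]
  constructor
  · rintro ⟨-, h⟩; exact h
  · rintro ⟨h1, h2, h3⟩; exact ⟨by omega, h1, h2, h3⟩

lemma Omega_eq (d : ℕ) (hd : d ≠ 1) :
    Omega d = C ((2:ℝ) ^ (S d).card) * ∏ k ∈ S d, (X - C (r d k)) := by
  rw [Omega, if_neg hd,
    show (Finset.range (d + 1)).filter (fun k => 1 ≤ k ∧ 2 * k ≤ d ∧ Nat.gcd k d = 1) = S d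
      from rfl,
    Finset.prod_mul_distrib, Finset.prod_const, ← C_pow]
  rfl

lemma angle_mem {d k : ℕ} (hk : k ∈ S d) :
    2 * (k:ℝ) * Real.pi / d ∈ Set.Icc 0 Real.pi := by
  obtain ⟨h1, h2, -⟩ := mem_S.mp hk
  have hd0 : (0:ℝ) < d := by
    have : (0:ℕ) < d := by omega
    exact_mod_cast this
  constructor
  · positivity
  · rw [div_le_iff₀ hd0]
    have h2' : 2 * (k:ℝ) ≤ d := by exact_mod_cast h2
    nlinarith [Real.pi_pos]

lemma r_injOn (d : ℕ) : Set.InjOn (r d) (S d : Set ℕ) := by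
  intro k hk k' hk' hr
  have hk1 : k ∈ S d := hk
  have hk2 : k' ∈ S d := hk'
  have h := Real.injOn_cos (angle_mem hk1) (angle_mem hk2) hr
  have hd0 : (0:ℝ) < d := by
    obtain ⟨a, b, -⟩ := mem_S.mp hk1
    have : (0:ℕ) < d := by omega
    exact_mod_cast this
  field_simp [Real.pi_ne_zero, ne_of_gt hd0] at h
  exact_mod_cast h

lemma card_S (d : ℕ) (hd : 3 ≤ d) : 2 * (S d).card = d.totient := by
  rw [Nat.totient]
  classical
  set A := (Finset.range d).filter d.Coprime with hA
  have hsplit := Finset.card_filter_add_card_filter_not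
    (s := A) (p := fun k => 2 * k ≤ d)
  have h1 : A.filter (fun k => 2 * k ≤ d) = S d := by
    ext k
    simp only [hA, Finset.mem_filter, Finset.mem_range, mem_S]
    constructor
    · rintro ⟨⟨hkd, hcop⟩, h2k⟩
      have hk1 : 1 ≤ k := by
        rcases Nat.eq_zero_or_pos k with h0 | h0
        · subst h0; simp [Nat.Coprime] at hcop; omega
        · exact h0
      exact ⟨hk1, h2k, Nat.coprime_comm.mp hcop⟩
    · rintro ⟨hk1, h2k, hcop⟩
      exact ⟨⟨by omega, Nat.coprime_comm.mp hcop⟩, h2k⟩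
  have h2 : (A.filter (fun k => ¬ 2 * k ≤ d)).card = (S d).card := by
    apply Finset.card_bij' (fun k _ => d - k) (fun k _ => d - k)
    · intro k hk
      simp only [hA, Finset.mem_filter, Finset.mem_range] at hk
      obtain ⟨⟨hkd, hcop⟩, h2k⟩ := hk
      rw [mem_S]
      refine ⟨by omega, by omega, ?_⟩
      rw [Nat.gcd_comm, Nat.gcd_self_sub_right (by omega : k ≤ d)]
      exact hcop
    · intro k hk
      rw [mem_S] at hk
      obtain ⟨hk1, h2k, hcop⟩ := hk
      have hne : 2 * k ≠ d := by
        intro hcontra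
        have hdvd : k ∣ d := ⟨2, by omega⟩
        rw [Nat.gcd_eq_left hdvd] at hcop
        omega
      simp only [hA, Finset.mem_filter, Finset.mem_range]
      refine ⟨⟨by omega, ?_⟩, by omega⟩
      rw [Nat.Coprime, Nat.gcd_self_sub_right (by omega : k ≤ d), Nat.gcd_comm]
      exact hcop
    · intro k hk
      simp only [hA, Finset.mem_filter, Finset.mem_range] at hk
      omega
    · intro k hk
      rw [mem_S] at hk
      omega
  rw [h1] at hsplit
  omega

lemma tot_mul : ∀ m : ℕ, 0 < m → ∀ n : ℕ, 0 < n →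
    (∀ p : ℕ, p.Prime → p ∣ m → p ∣ n) → (m * n).totient = m * n.totient := by
  intro m
  induction m using Nat.strong_induction_on with
  | _ m ih =>
    intro hm n hn h
    rcases eq_or_ne m 1 with rfl | hm1
    · simp
    · obtain ⟨p, hp, hpm⟩ : ∃ p : ℕ, p.Prime ∧ p ∣ m :=
        ⟨m.minFac, Nat.minFac_prime hm1, Nat.minFac_dvd m⟩
      have hpn : p ∣ n := h p hp hpm
      obtain ⟨m', hm'⟩ := hpm
      have hm'pos : 0 < m' := by
        rcases Nat.eq_zero_or_pos m' with h0 | h0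
        · exfalso; rw [h0, mul_zero] at hm'; omega
        · exact h0
      have hm'lt : m' < m := by
        have h2 : 2 ≤ p := hp.two_le
        calc m' < 2 * m' := by omega
        _ ≤ p * m' := Nat.mul_le_mul_right m' h2
        _ = m := hm'.symm
      calc (m * n).totient = (p * (m' * n)).totient := by rw [hm', mul_assoc]
        _ = p * (m' * n).totient :=
            Nat.totient_mul_of_prime_of_dvd hp (hpn.mul_left m')
        _ = p * (m' * n.totient) := by
            rw [ih m' hm'lt hm'pos n hn (fun q hq hd => h q hq (hm' ▸ hd.mul_left p))]
        _ = m * n.totient := by rw [hm']; ring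

lemma cos_eq_r (n k : ℕ) (hn : 3 ≤ n) (hcop : Nat.gcd k n = 1) :
    ∃ k' ∈ S n, r n k' = Real.cos (2 * k * Real.pi / n) := by
  have hn0 : 0 < n := by omega
  set s := k % n with hs
  have hsn : s < n := Nat.mod_lt k hn0
  have hgcd : Nat.gcd s n = 1 := by
    rw [hs, ← Nat.gcd_rec, Nat.gcd_comm]
    exact hcop
  have hs1 : 1 ≤ s := by
    rcases Nat.eq_zero_or_pos s with h0 | h0
    · rw [h0, Nat.gcd_comm, Nat.gcd_zero_right] at hgcd; omega
    · exact h0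
  have hnR : (n:ℝ) ≠ 0 := by positivity
  have hq : (k:ℝ) = n * ((k / n : ℕ):ℝ) + (s:ℝ) := by
    rw [hs]
    exact_mod_cast (Nat.div_add_mod k n).symm
  have hcos1 : Real.cos (2 * k * Real.pi / n) = Real.cos (2 * s * Real.pi / n) := by
    have h1 : 2 * (k:ℝ) * Real.pi / n
        = 2 * (s:ℝ) * Real.pi / n + ((k / n : ℕ):ℝ) * (2 * Real.pi) := by
      rw [div_add' _ _ _ hnR, hq]; congr 1; ring
    rw [h1]
    have := Real.cos_add_int_mul_two_pi (2 * (s:ℝ) * Real.pi / n) ((k / n : ℕ) : ℤ)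
    push_cast at this
    exact this
  by_cases hc : 2 * s ≤ n
  · exact ⟨s, mem_S.mpr ⟨hs1, hc, hgcd⟩, hcos1.symm⟩
  · refine ⟨n - s, mem_S.mpr ⟨by omega, by omega, ?_⟩, ?_⟩
    · exact (Nat.coprime_self_sub_left hsn.le).mpr hgcd
    · rw [hcos1]
      show Real.cos (2 * ((n - s : ℕ):ℝ) * Real.pi / n) = _
      have harg : 2 * ((n - s : ℕ):ℝ) * Real.pi / n
          = ((1:ℤ):ℝ) * (2 * Real.pi) - 2 * (s:ℝ) * Real.pi / n := by
        rw [Nat.cast_sub hsn.le]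
        push_cast
        field_simp
      rw [harg, Real.cos_int_mul_two_pi_sub]

lemma comp_root (m n : ℕ) (hm : 0 < m) (hn : 3 ≤ n)
    (k : ℕ) (hk : k ∈ S (m * n)) :
    ((Omega n).comp (T ℝ (m:ℤ))).eval (r (m * n) k) = 0 := by
  obtain ⟨hk1, hk2, hkcop⟩ := mem_S.mp hk
  have hmR : (m:ℝ) ≠ 0 := by positivity
  have hnR : (n:ℝ) ≠ 0 := by
    have : (0:ℕ) < n := by omega
    positivity
  have hTeval : (T ℝ (m:ℤ)).eval (r (m * n) k) = Real.cos (2 * k * Real.pi / n) := by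
    show (T ℝ (m:ℤ)).eval (Real.cos (2 * (k:ℕ) * Real.pi / (m * n : ℕ))) = _
    rw [Polynomial.Chebyshev.T_real_cos (2 * (k:ℕ) * Real.pi / ((m * n : ℕ):ℝ)) (m:ℤ)]
    congr 1
    push_cast
    field_simp
  rw [eval_comp, hTeval]
  have hcopn : Nat.gcd k n = 1 :=
    Nat.Coprime.coprime_dvd_right (dvd_mul_left n m) hkcop
  obtain ⟨k', hk', hr'⟩ := cos_eq_r n k hn hcopn
  rw [Omega_eq n (by omega), eval_mul, eval_prod]
  apply mul_eq_zero_of_right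
  apply Finset.prod_eq_zero hk'
  simp [hr']

theorem omega_mul_eq_omega_comp (m n : ℕ) (hm : 0 < m) (hn : 3 ≤ n)
    (h : ∀ p : ℕ, p.Prime → p ∣ m → p ∣ n) :
    Omega (m * n) = (Omega n).comp (T ℝ m) := by
  obtain ⟨m', rfl⟩ : ∃ m', m = m' + 1 := ⟨m - 1, by omega⟩
  set m := m' + 1 with hmdef
  set d := m * n with hd
  have hd3 : 3 ≤ d := le_trans hn (Nat.le_mul_of_pos_left n hm)
  have hd1 : d ≠ 1 := by omega
  have hn1 : n ≠ 1 := by omega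
  set Nn := (S n).card with hNn
  set N := (S d).card with hNcard
  have hNN : N = m * Nn := by
    have h1 := card_S d hd3
    have h2 := card_S n hn
    have h3 : d.totient = m * n.totient := tot_mul m hm n (by omega) h
    have key : 2 * N = 2 * (m * Nn) := by
      calc 2 * N = d.totient := h1
        _ = m * n.totient := h3
        _ = m * (2 * Nn) := by rw [← h2]
        _ = 2 * (m * Nn) := by ring
    omega
  obtain ⟨hTdeg, hTlc⟩ := T_deg m'
  -- facts about Omega n
  set Pn := ∏ k ∈ S n, (X - C (r n k)) with hPn
  have hPn_monic : Pn.Monic := monic_prod_of_monic _ _ (fun k _ => monic_X_sub_C _)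
  have hPn_deg : Pn.natDegree = Nn := by
    rw [hPn, natDegree_prod_of_monic _ _ (fun k _ => monic_X_sub_C _)]
    simp [hNn]
  have h2Nn : ((2:ℝ) ^ Nn) ≠ 0 := pow_ne_zero _ two_ne_zero
  have hOn_deg : (Omega n).natDegree = Nn := by
    rw [Omega_eq n hn1, natDegree_C_mul h2Nn, hPn_deg]
  have hOn_lc : (Omega n).leadingCoeff = 2 ^ Nn := by
    rw [Omega_eq n hn1, leadingCoeff_mul, leadingCoeff_C, hPn_monic.leadingCoeff, mul_one]
  -- RHS facts
  set RHS := (Omega n).comp (T ℝ (m:ℤ)) with hRHS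
  have hRdeg : RHS.natDegree = N := by
    rw [hRHS, natDegree_comp, hOn_deg, hTdeg, hNN]; ring
  have hRlc : RHS.leadingCoeff = 2 ^ N := by
    rw [hRHS, leadingCoeff_comp (by rw [hTdeg]; omega), hOn_lc, hOn_deg, hTlc,
      ← pow_mul, ← pow_add, hNN]
    congr 1
    ring
  have hR0 : RHS ≠ 0 := by
    intro hc
    rw [hc, leadingCoeff_zero] at hRlc
    exact (pow_ne_zero N (two_ne_zero)) hRlc.symm
  -- the monic product for d
  set M := ∏ k ∈ S d, (X - C (r d k)) with hM
  have hM_monic : M.Monic := monic_prod_of_monic _ _ (fun k _ => monic_X_sub_C _)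
  have hM_deg : M.natDegree = N := by
    rw [hM, natDegree_prod_of_monic _ _ (fun k _ => monic_X_sub_C _)]
    simp [hNcard]
  -- M divides RHS
  have hnodup : ((S d).val.map (r d)).Nodup :=
    Multiset.Nodup.map_on (fun k hk k' hk' => r_injOn d hk hk') (S d).nodup
  have hMdvd : M ∣ RHS := by
    have hMeq : M = (((S d).val.map (r d)).map (fun a => X - C a)).prod := by
      rw [hM, Finset.prod_eq_multiset_prod, Multiset.map_map]
      rfl
    rw [hMeq]
    rw [Multiset.prod_X_sub_C_dvd_iff_le_roots hR0]
    rw [Multiset.le_iff_subset hnodup]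
    intro a ha
    obtain ⟨k, hk, rfl⟩ := Multiset.mem_map.mp ha
    rw [mem_roots hR0]
    exact comp_root m n hm hn k hk
  obtain ⟨q, hq⟩ := hMdvd
  have hM0 : M ≠ 0 := hM_monic.ne_zero
  have hq0 : q ≠ 0 := by
    intro hc
    rw [hc, mul_zero] at hq
    exact hR0 hq
  have hqdeg : q.natDegree = 0 := by
    have := hRdeg
    rw [hq, natDegree_mul hM0 hq0, hM_deg] at this
    omega
  have hqC : q = C ((2:ℝ) ^ N) := by
    have hlc : RHS.leadingCoeff = q.leadingCoeff := by
      rw [hq, leadingCoeff_mul, hM_monic.leadingCoeff, one_mul]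
    have h2' : q.coeff 0 = (2:ℝ) ^ N := by
      rw [← hRlc, hlc, leadingCoeff, hqdeg]
    rw [eq_C_of_natDegree_eq_zero hqdeg, h2']
  rw [Omega_eq d hd1, ← hM, ← hNcard]
  rw [hq, hqC]
  ring
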